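/- The decoding function delta : Cr(mu) -> Cr(mu), delta(c) = u_{c^{-1}c^∨}^{-1} c^{-1} u_{c^{-1}c^∨}, is an involution: delta(delta(c)) = c for all c in Cr(mu). -/

import Mathlib

open Equiv

/-- Word metric on the symmetric group induced by the set of all transpositions:
`trdist a b` is the minimal number of transpositions whose product is `a⁻¹ * b`. -/
noncomputable def trdist {n : ℕ} (a b : Equiv.Perm (Fin n)) : ℕ :=
  sInf {k | ∃ l : List (Equiv.Perm (Fin n)), l.length = k ∧ (∀ t ∈ l, t.IsSwap) ∧ l.prod = a⁻¹ * b}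

/-- The set of midpoints of `a` and `b`. -/
noncomputable def midpts {n : ℕ} (a b : Equiv.Perm (Fin n)) : Set (Equiv.Perm (Fin n)) :=
  {m | trdist a m + trdist m b = trdist a b ∧ |(trdist a m : ℤ) - (trdist m b : ℤ)| ≤ 1}

/-- The forward cycle on a finite subset: cycles through its elements in increasing order. -/
def fwdCycle {n : ℕ} (s : Finset (Fin n)) : Equiv.Perm (Fin n) :=
  (s.sort (· ≤ ·)).formPerm

/-- The increasing list of minima of the cycles (orbits, including fixed points) of `p`. -/
noncomputable def cycleMins {n : ℕ} (p : Equiv.Perm (Fin n)) : List (Fin n) :=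
  Finset.sort
    (@Finset.filter _ (fun i => ∀ j, p.SameCycle i j → i ≤ j) (Classical.decPred _) Finset.univ) (· ≤ ·)

/-- The number of orbits (cycles, including fixed points) of `p` acting on `Fin n`. -/
noncomputable def cycleCount {n : ℕ} (p : Equiv.Perm (Fin n)) : ℕ :=
  (cycleMins p).length

/-- The ordered cycle type of `p`: the list of cycle (orbit) lengths of `p`,
ordered by increasing cycle minima. -/
noncomputable def orderedCycleType {n : ℕ} (p : Equiv.Perm (Fin n)) : List ℕ :=
  (cycleMins p).map (fun i =>
    (@Finset.filter _ (fun j => p.SameCycle i j) (Classical.decPred _) Finset.univ).card)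

/-- The canonical permutation with ordered cycle type `μ` (starting at offset `off`):
it cyclically permutes the first `μ₁` points in increasing order, then the next `μ₂` points,
and so on. -/
def canonPerm (n : ℕ) : List ℕ → ℕ → Equiv.Perm (Fin n)
  | [], _ => 1
  | m :: rest, off =>
      fwdCycle ((Finset.univ : Finset (Fin n)).filter (fun i => off ≤ i.val ∧ i.val < off + m)) *
        canonPerm n rest (off + m)

/-- `u` conjugates `p` into `q` and maps the sequence of cycle minima of `p`
to that of `q`, entrywise in order. -/
noncomputable def IsConjugator {n : ℕ} (p q u : Equiv.Perm (Fin n)) : Prop :=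
  u * p * u⁻¹ = q ∧ (cycleMins p).map u = cycleMins q

/-- A list of blocks is noncrossing: there are no `a < b < c < d` with `a, c` in one block
and `b, d` in a different block. -/
def NoncrossingList {n : ℕ} (L : List (Finset (Fin n))) : Prop :=
  ¬ ∃ a b c d : Fin n, a < b ∧ b < c ∧ c < d ∧
    ∃ s ∈ L, ∃ t ∈ L, s ≠ t ∧ a ∈ s ∧ c ∈ s ∧ b ∈ t ∧ d ∈ t

/-- The set of all midpoints of pairs `(a, b) ∈ A × B`. -/
noncomputable def midSet {n : ℕ} (A B : Finset (Equiv.Perm (Fin n))) :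
    Finset (Equiv.Perm (Fin n)) :=
  @Finset.filter _ (fun m => ∃ a ∈ A, ∃ b ∈ B, m ∈ midpts a b) (Classical.decPred _) Finset.univ

/-- The distance between two sets of permutations. -/
noncomputable def setDist {n : ℕ} (A B : Finset (Equiv.Perm (Fin n))) : ℕ :=
  sInf {k | ∃ a ∈ A, ∃ b ∈ B, trdist a b = k}

/-- The embedding of the hypercube `Z₂^N` into `S(n)` (for `2N ≤ n`) sending the `i`-th
standard basis vector to the transposition of `2i` and `2i+1` (0-indexed). -/
def cubeMap (N n : ℕ) (h : 2 * N ≤ n) (x : Fin N → ZMod 2) : Equiv.Perm (Fin n) :=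
  ((List.finRange N).map (fun i =>
    if x i = 1 then
      Equiv.swap (⟨2 * i.val, by have := i.isLt; omega⟩ : Fin n)
        ⟨2 * i.val + 1, by have := i.isLt; omega⟩
    else 1)).prod


section Aux

open Equiv Equiv.Perm Relation

variable {n : ℕ}

/-- Base relation generated by a list of permutations (edges of the "transposition graph"). -/
def relL (l : List (Equiv.Perm (Fin n))) (x y : Fin n) : Prop := ∃ t ∈ l, t x = y

/-- Extend a pointwise `R x (f x)` statement to all integer powers of `f`. -/
lemma rel_zpow {α : Type*} {R : α → α → Prop} (hR : Equivalence R) {f : Equiv.Perm α}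
    (h : ∀ x, R x (f x)) : ∀ (i : ℤ) (x : α), R x ((f ^ i) x) := by
  have hneg : ∀ x, R x (f⁻¹ x) := fun x => hR.symm (by simpa using h (f⁻¹ x))
  intro i
  induction i using Int.induction_on with
  | zero => intro x; simpa using hR.refl x
  | succ i ih =>
      intro x
      have hx : (f ^ ((i : ℤ) + 1)) x = (f ^ (i : ℤ)) (f x) := by
        rw [zpow_add_one]; rfl
      rw [hx]
      exact hR.trans (h x) (ih (f x))
  | pred i ih =>
      intro x
      have hx : (f ^ (-(i : ℤ) - 1)) x = (f ^ (-(i : ℤ))) (f⁻¹ x) := by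
        rw [sub_eq_add_neg, zpow_add, zpow_neg_one]; rfl
      rw [hx]
      exact hR.trans (hneg x) (ih (f⁻¹ x))

lemma relL_prod (l : List (Equiv.Perm (Fin n))) :
    ∀ x, Relation.EqvGen (relL l) x (l.prod x) := by
  induction l with
  | nil => intro x; simpa using Relation.EqvGen.refl x
  | cons t l ih =>
      intro x
      have h1 : Relation.EqvGen (relL (t :: l)) x (l.prod x) :=
        Relation.EqvGen.mono (fun a b ⟨s, hs, h⟩ => ⟨s, List.mem_cons_of_mem _ hs, h⟩) _ _ (ih x)
      have h2 : Relation.EqvGen (relL (t :: l)) (l.prod x) (t (l.prod x)) :=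
        Relation.EqvGen.rel _ _ ⟨t, List.mem_cons_self, rfl⟩
      have h3 : (t :: l).prod x = t (l.prod x) := by
        rw [List.prod_cons]; rfl
      rw [h3]
      exact (Relation.EqvGen.is_equivalence _).trans h1 h2

lemma sameCycle_imp_eqvGen (l : List (Equiv.Perm (Fin n))) {x y : Fin n}
    (h : Equiv.Perm.SameCycle l.prod x y) : Relation.EqvGen (relL l) x y := by
  obtain ⟨i, hi⟩ := h
  rw [← hi]
  exact rel_zpow (Relation.EqvGen.is_equivalence _) (relL_prod l) i x

lemma eqvGen_cons_swap {l : List (Equiv.Perm (Fin n))} {a b x y : Fin n}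
    (h : Relation.EqvGen (relL (Equiv.swap a b :: l)) x y) :
    Relation.EqvGen (relL l) x y
      ∨ (Relation.EqvGen (relL l) x a ∧ Relation.EqvGen (relL l) b y)
      ∨ (Relation.EqvGen (relL l) x b ∧ Relation.EqvGen (relL l) a y) := by
  have hE := Relation.EqvGen.is_equivalence (relL l)
  induction h with
  | rel u v huv =>
      obtain ⟨t, ht, htuv⟩ := huv
      rcases List.mem_cons.1 ht with rfl | ht
      · rcases eq_or_ne u a with rfl | hua
        · rw [Equiv.swap_apply_left] at htuv
          exact Or.inr (Or.inl ⟨hE.refl u, htuv ▸ hE.refl v⟩)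
        · rcases eq_or_ne u b with rfl | hub
          · rw [Equiv.swap_apply_right] at htuv
            exact Or.inr (Or.inr ⟨hE.refl u, htuv ▸ hE.refl v⟩)
          · rw [Equiv.swap_apply_of_ne_of_ne hua hub] at htuv
            exact Or.inl (htuv ▸ hE.refl u)
      · exact Or.inl (Relation.EqvGen.rel _ _ ⟨t, ht, htuv⟩)
  | refl u => exact Or.inl (hE.refl u)
  | symm u v _ ih =>
      rcases ih with h1 | ⟨h1, h2⟩ | ⟨h1, h2⟩
      · exact Or.inl (hE.symm h1)
      · exact Or.inr (Or.inr ⟨hE.symm h2, hE.symm h1⟩)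
      · exact Or.inr (Or.inl ⟨hE.symm h2, hE.symm h1⟩)
  | trans u v w _ _ ih1 ih2 =>
      rcases ih1 with h1 | ⟨h1, h1'⟩ | ⟨h1, h1'⟩ <;>
        rcases ih2 with h2 | ⟨h2, h2'⟩ | ⟨h2, h2'⟩
      · exact Or.inl (hE.trans h1 h2)
      · exact Or.inr (Or.inl ⟨hE.trans h1 h2, h2'⟩)
      · exact Or.inr (Or.inr ⟨hE.trans h1 h2, h2'⟩)
      · exact Or.inr (Or.inl ⟨h1, hE.trans h1' h2⟩)
      · exact Or.inr (Or.inl ⟨h1, h2'⟩)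
      · exact Or.inl (hE.trans h1 h2')
      · exact Or.inr (Or.inr ⟨h1, hE.trans h1' h2⟩)
      · exact Or.inl (hE.trans h1 h2')
      · exact Or.inr (Or.inr ⟨h1, h2'⟩)

lemma eqvGen_nil_eq {x y : Fin n}
    (h : Relation.EqvGen (relL ([] : List (Equiv.Perm (Fin n)))) x y) : x = y := by
  induction h with
  | rel u v huv => obtain ⟨t, ht, -⟩ := huv; exact absurd ht List.not_mem_nil
  | refl u => rfl
  | symm u v _ ih => exact ih.symm
  | trans u v w _ _ ih1 ih2 => exact ih1.trans ih2

lemma card_quot_relL (l : List (Equiv.Perm (Fin n))) (hl : ∀ t ∈ l, t.IsSwap) :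
    n - l.length ≤ Nat.card (Quot (relL l)) := by
  classical
  induction l with
  | nil =>
      have hinj : Function.Injective (Quot.mk (relL ([] : List (Equiv.Perm (Fin n))))) :=
        fun x y hxy => eqvGen_nil_eq (Quot.eq.1 hxy)
      have := Nat.card_eq_of_bijective _ ⟨hinj, Quot.mk_surjective⟩
      simp only [Nat.card_eq_fintype_card, Fintype.card_fin] at this
      simp [← this]
  | cons t l ih =>
      obtain ⟨a, b, hab, rfl⟩ := hl t (List.mem_cons_self)
      have ih' := ih (fun s hs => hl s (List.mem_cons_of_mem _ hs))
      have hmono : ∀ x y : Fin n, relL l x y → relL (Equiv.swap a b :: l) x y :=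
        fun x y ⟨s, hs, h'⟩ => ⟨s, List.mem_cons_of_mem _ hs, h'⟩
      let g : Quot (relL l) → Quot (relL (Equiv.swap a b :: l)) := Quot.map id hmono
      let j : Quot (relL l) → Quot (relL (Equiv.swap a b :: l)) ⊕ Unit := fun z =>
        if z = Quot.mk _ b then Sum.inr () else Sum.inl (g z)
      have hgmk : ∀ x : Fin n, g (Quot.mk _ x) = Quot.mk _ x := fun x => rfl
      have hj : Function.Injective j := by
        intro z₁ z₂ hz
        by_cases h1 : z₁ = Quot.mk _ b <;> by_cases h2 : z₂ = Quot.mk _ b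
        · rw [h1, h2]
        · simp only [j, if_pos h1, if_neg h2] at hz; exact absurd hz (by simp)
        · simp only [j, if_neg h1, if_pos h2] at hz; exact absurd hz (by simp)
        · simp only [j, if_neg h1, if_neg h2, Sum.inl.injEq] at hz
          obtain ⟨x, rfl⟩ := Quot.exists_rep z₁
          obtain ⟨y, rfl⟩ := Quot.exists_rep z₂
          rw [hgmk, hgmk] at hz
          have hxy := Quot.eq.1 hz
          rcases eqvGen_cons_swap hxy with h | ⟨ha1, hb1⟩ | ⟨ha1, hb1⟩
          · exact Quot.eqvGen_sound h
          · exact absurd (Quot.eqvGen_sound ((Relation.EqvGen.is_equivalence _).symm hb1)) h2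
          · exact absurd (Quot.eqvGen_sound ha1) h1
      have hcard : Nat.card (Quot (relL l)) ≤
          Nat.card (Quot (relL (Equiv.swap a b :: l))) + 1 := by
        calc Nat.card (Quot (relL l))
            ≤ Nat.card (Quot (relL (Equiv.swap a b :: l)) ⊕ Unit) :=
              Nat.card_le_card_of_injective j hj
        _ = Nat.card (Quot (relL (Equiv.swap a b :: l))) + 1 := by simp [Nat.card_sum]
      simp only [List.length_cons]
      omega

end Aux

section Aux2

open Equiv Equiv.Perm

variable {n : ℕ}

lemma canonPerm_cons (m : ℕ) (rest : List ℕ) (off : ℕ) :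
    canonPerm n (m :: rest) off =
      fwdCycle ((Finset.univ : Finset (Fin n)).filter (fun i => off ≤ i.val ∧ i.val < off + m)) *
        canonPerm n rest (off + m) := rfl

lemma sameCycle_of_agree {f g : Equiv.Perm (Fin n)} {s : Set (Fin n)}
    (hclosed : ∀ x ∈ s, f x ∈ s) (hagree : ∀ x ∈ s, f x = g x)
    {x y : Fin n} (hx : x ∈ s) (h : f.SameCycle x y) : g.SameCycle x y := by
  obtain ⟨i, _, hi⟩ := h.exists_pow_eq'
  have key : ∀ j : ℕ, (f ^ j) x ∈ s ∧ (f ^ j) x = (g ^ j) x := by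
    intro j
    induction j with
    | zero => simpa using hx
    | succ j ih =>
        have h1 : (f ^ (j + 1)) x = f ((f ^ j) x) := by rw [pow_succ']; rfl
        refine ⟨by rw [h1]; exact hclosed _ ih.1, ?_⟩
        rw [h1, hagree _ ih.1, ih.2, pow_succ']
        rfl
  exact ⟨(i : ℤ), by rw [zpow_natCast, ← (key i).2, hi]⟩

lemma perm_ge_of_fix {g : Equiv.Perm (Fin n)} {lo : ℕ} (hfix : ∀ x : Fin n, x.val < lo → g x = x)
    {x : Fin n} (hx : lo ≤ x.val) : lo ≤ (g x).val := by
  by_contra h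
  push_neg at h
  have h1 : g (g x) = g x := hfix (g x) h
  have h2 : g x = x := g.injective h1
  omega

lemma canonPerm_fix : ∀ (μ : List ℕ) (off : ℕ) (x : Fin n), x.val < off →
    canonPerm n μ off x = x := by
  intro μ
  induction μ with
  | nil => intro off x _; rfl
  | cons m rest ih =>
      intro off x hx
      rw [canonPerm_cons, Equiv.Perm.mul_apply, ih (off + m) x (by omega)]
      apply List.formPerm_apply_of_notMem
      simp only [fwdCycle, Finset.mem_sort, Finset.mem_filter]
      omega

lemma mem_blockList {off m : ℕ} {x : Fin n} :
    x ∈ Finset.sort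
        ((Finset.univ : Finset (Fin n)).filter (fun i => off ≤ i.val ∧ i.val < off + m)) (· ≤ ·) ↔
      off ≤ x.val ∧ x.val < off + m := by
  rw [Finset.mem_sort, Finset.mem_filter]
  simp

lemma block_card (off m : ℕ) (h : off + m ≤ n) :
    ((Finset.univ : Finset (Fin n)).filter (fun i => off ≤ i.val ∧ i.val < off + m)).card = m := by
  apply Finset.card_eq_of_bijective (fun i hi => (⟨off + i, by omega⟩ : Fin n))
  · intro a ha
    rw [Finset.mem_filter] at ha
    refine ⟨a.val - off, by omega, by apply Fin.ext; simp; omega⟩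
  · intro i hi
    rw [Finset.mem_filter]
    refine ⟨Finset.mem_univ _, by simp, by simp; omega⟩
  · intro i j hi hj hij
    have := congrArg Fin.val hij
    simp at this
    omega

lemma blockList_length (off m : ℕ) (h : off + m ≤ n) :
    (Finset.sort
      ((Finset.univ : Finset (Fin n)).filter (fun i => off ≤ i.val ∧ i.val < off + m)) (· ≤ ·)).length
      = m := by
  rw [Finset.length_sort, block_card off m h]

lemma canonPerm_block_sameCycle (m : ℕ) (rest : List ℕ) (off : ℕ) (hm : 0 < m)
    (hmn : off + m ≤ n) (x : Fin n) (hx1 : off ≤ x.val) (hx2 : x.val < off + m) :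
    Equiv.Perm.SameCycle (canonPerm n (m :: rest) off) x ⟨off, by omega⟩ := by
  set B := (Finset.univ : Finset (Fin n)).filter (fun i => off ≤ i.val ∧ i.val < off + m) with hB
  set lB := Finset.sort B (· ≤ ·) with hlB
  have hmem : ∀ z : Fin n, z ∈ lB ↔ off ≤ z.val ∧ z.val < off + m := fun z => mem_blockList
  have hlen : lB.length = m := blockList_length off m hmn
  have hnd : lB.Nodup := Finset.sort_nodup _ _
  have hxB : x ∈ lB := (hmem x).2 ⟨hx1, hx2⟩
  have hoB : (⟨off, by omega⟩ : Fin n) ∈ lB := by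
    rw [hmem]
    simp only [Fin.val_mk]
    omega
  have hclosed : ∀ z ∈ {w : Fin n | w ∈ lB}, lB.formPerm z ∈ {w : Fin n | w ∈ lB} :=
    fun z hz => List.formPerm_apply_mem_of_mem hz
  have hagree : ∀ z ∈ {w : Fin n | w ∈ lB}, lB.formPerm z = (canonPerm n (m :: rest) off) z := by
    intro z hz
    rw [canonPerm_cons, Equiv.Perm.mul_apply, canonPerm_fix rest (off + m) z ((hmem z).1 hz).2]
    rfl
  have hFC : lB.formPerm.SameCycle x ⟨off, by omega⟩ := by
    rcases eq_or_lt_of_le (Nat.one_le_iff_ne_zero.2 hm.ne') with h1 | h2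
    · -- m = 1 : x = ⟨off⟩
      have hxo : x = (⟨off, by omega⟩ : Fin n) := by apply Fin.ext; simp; omega
      exact hxo ▸ Equiv.Perm.SameCycle.refl lB.formPerm x
    · have h2' : 2 ≤ lB.length := by omega
      exact (List.isCycle_formPerm hnd h2').sameCycle
        ((List.formPerm_apply_mem_ne_self_iff _ hnd _ hxB).2 h2')
        ((List.formPerm_apply_mem_ne_self_iff _ hnd _ hoB).2 h2')
  exact sameCycle_of_agree hclosed hagree hxB hFC

lemma canonPerm_rest_sameCycle (m : ℕ) (rest : List ℕ) (off : ℕ) {x y : Fin n}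
    (hx : off + m ≤ x.val)
    (h : Equiv.Perm.SameCycle (canonPerm n rest (off + m)) x y) :
    Equiv.Perm.SameCycle (canonPerm n (m :: rest) off) x y := by
  have hfix : ∀ z : Fin n, z.val < off + m → canonPerm n rest (off + m) z = z :=
    fun z hz => canonPerm_fix rest (off + m) z hz
  apply sameCycle_of_agree (s := {z : Fin n | off + m ≤ z.val})
    (fun z hz => perm_ge_of_fix hfix hz) ?_ hx h
  intro z hz
  rw [canonPerm_cons, Equiv.Perm.mul_apply]
  have hge : off + m ≤ ((canonPerm n rest (off + m)) z).val := perm_ge_of_fix hfix hz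
  symm
  apply List.formPerm_apply_of_notMem
  simp only [Finset.mem_sort, Finset.mem_filter]
  omega

lemma canonPerm_reps : ∀ (μ : List ℕ) (off : ℕ), (∀ m ∈ μ, 0 < m) → off + μ.sum ≤ n →
    ∃ reps : List (Fin n), reps.length = μ.length ∧
      ∀ x : Fin n, off ≤ x.val → x.val < off + μ.sum →
        ∃ v ∈ reps, Equiv.Perm.SameCycle (canonPerm n μ off) x v := by
  intro μ
  induction μ with
  | nil =>
      refine fun off _ _ => ⟨[], rfl, fun x h1 h2 => ?_⟩
      simp only [List.sum_nil] at h2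
      omega
  | cons m rest ih =>
      intro off hpos hsum
      simp only [List.sum_cons] at hsum
      have hm : 0 < m := hpos m (List.mem_cons_self)
      obtain ⟨reps', hlen', hreps'⟩ :=
        ih (off + m) (fun a ha => hpos a (List.mem_cons_of_mem _ ha)) (by omega)
      refine ⟨⟨off, by omega⟩ :: reps', by simp [hlen'], ?_⟩
      intro x hx1 hx2
      simp only [List.sum_cons] at hx2
      by_cases hcase : x.val < off + m
      · exact ⟨_, List.mem_cons_self,
          canonPerm_block_sameCycle m rest off hm (by omega) x hx1 hcase⟩
      · push_neg at hcase
        obtain ⟨v, hv, hsc⟩ := hreps' x hcase (by omega)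
        exact ⟨v, List.mem_cons_of_mem _ hv, canonPerm_rest_sameCycle m rest off hcase hsc⟩

lemma nOrb_canonPerm_le (μ : List ℕ) (hpos : ∀ m ∈ μ, 0 < m) (hsum : μ.sum = n) :
    Nat.card (Quot (Equiv.Perm.SameCycle (canonPerm n μ 0))) ≤ μ.length := by
  obtain ⟨reps, hlen, hreps⟩ := canonPerm_reps (n := n) μ 0 hpos (by omega)
  have hsurj : Function.Surjective
      (fun i : Fin reps.length => Quot.mk (Equiv.Perm.SameCycle (canonPerm n μ 0)) (reps.get i)) := by
    intro q
    obtain ⟨x, rfl⟩ := Quot.exists_rep q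
    obtain ⟨v, hv, hsc⟩ := hreps x (Nat.zero_le _) (by have := x.isLt; omega)
    obtain ⟨i, hi⟩ := List.mem_iff_get.1 hv
    exact ⟨i, by show Quot.mk _ (reps.get i) = _; rw [hi]; exact Quot.sound hsc.symm⟩
  calc Nat.card (Quot (Equiv.Perm.SameCycle (canonPerm n μ 0)))
      ≤ Nat.card (Fin reps.length) := Nat.card_le_card_of_surjective _ hsurj
  _ = μ.length := by simp [hlen]

lemma formPerm_swapFactors : ∀ (l : List (Fin n)), l.Nodup →
    ∃ sw : List (Equiv.Perm (Fin n)), (∀ t ∈ sw, t.IsSwap) ∧ sw.prod = l.formPerm ∧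
      sw.length = l.length - 1 := by
  intro l
  induction l with
  | nil => exact fun _ => ⟨[], by simp, by simp, rfl⟩
  | cons x l ih =>
      intro hnd
      cases l with
      | nil => exact ⟨[], by simp, by simp, rfl⟩
      | cons y l' =>
          obtain ⟨sw, h1, h2, h3⟩ := ih hnd.of_cons
          have hxy : x ≠ y := by
            have := (List.nodup_cons.1 hnd).1
            simp only [List.mem_cons] at this
            push_neg at this
            exact this.1
          refine ⟨Equiv.swap x y :: sw, ?_, ?_, ?_⟩
          · intro t ht
            rcases List.mem_cons.1 ht with rfl | ht
            · exact ⟨x, y, hxy, rfl⟩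
            · exact h1 t ht
          · rw [List.prod_cons, h2, List.formPerm_cons_cons]
          · simp only [List.length_cons] at h3 ⊢
            omega

lemma canonPerm_swapFactors : ∀ (μ : List ℕ) (off : ℕ), (∀ m ∈ μ, 0 < m) → off + μ.sum ≤ n →
    ∃ sw : List (Equiv.Perm (Fin n)), (∀ t ∈ sw, t.IsSwap) ∧ sw.prod = canonPerm n μ off ∧
      sw.length + μ.length = μ.sum := by
  intro μ
  induction μ with
  | nil => exact fun off _ _ => ⟨[], by simp, by simp [canonPerm], by simp⟩
  | cons m rest ih =>
      intro off hpos hsum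
      simp only [List.sum_cons] at hsum
      have hm : 0 < m := hpos m (List.mem_cons_self)
      obtain ⟨sw', h1', h2', h3'⟩ :=
        ih (off + m) (fun a ha => hpos a (List.mem_cons_of_mem _ ha)) (by omega)
      obtain ⟨swb, hb1, hb2, hb3⟩ := formPerm_swapFactors
        (Finset.sort
          ((Finset.univ : Finset (Fin n)).filter (fun i => off ≤ i.val ∧ i.val < off + m)) (· ≤ ·))
        (Finset.sort_nodup _ _)
      refine ⟨swb ++ sw', ?_, ?_, ?_⟩
      · intro t ht
        rcases List.mem_append.1 ht with ht | ht
        · exact hb1 t ht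
        · exact h1' t ht
      · rw [List.prod_append, hb2, h2']
        rfl
      · rw [blockList_length off m (by omega)] at hb3
        simp only [List.length_append, List.length_cons, List.sum_cons]
        omega

end Aux2

section Aux3

open Equiv Equiv.Perm

variable {n : ℕ}

lemma trdist_exists (a b : Equiv.Perm (Fin n)) :
    ∃ l : List (Equiv.Perm (Fin n)), l.length = trdist a b ∧ (∀ t ∈ l, t.IsSwap) ∧
      l.prod = a⁻¹ * b := by
  have hne : {k | ∃ l : List (Equiv.Perm (Fin n)),
      l.length = k ∧ (∀ t ∈ l, t.IsSwap) ∧ l.prod = a⁻¹ * b}.Nonempty := by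
    obtain ⟨l, hp, hs⟩ := (Equiv.Perm.truncSwapFactors (a⁻¹ * b)).out
    exact ⟨l.length, l, rfl, hs, hp⟩
  obtain ⟨l, h1, h2, h3⟩ := Nat.sInf_mem hne
  exact ⟨l, by rw [trdist]; exact h1, h2, h3⟩

lemma geodesic_sameCycle (μ : List ℕ) (hpos : ∀ m ∈ μ, 0 < m) (hsum : μ.sum = n)
    {P c : Equiv.Perm (Fin n)} (hP : P = canonPerm n μ 0)
    (hgeo : trdist 1 c + trdist c P = trdist 1 P) :
    ∀ x, P.SameCycle x (c x) := by
  obtain ⟨l₁, hl₁len, hl₁sw, hl₁prod⟩ := trdist_exists 1 c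
  obtain ⟨l₂, hl₂len, hl₂sw, hl₂prod⟩ := trdist_exists c P
  rw [inv_one, one_mul] at hl₁prod
  set l := l₁ ++ l₂ with hl
  have hlprod : l.prod = P := by
    rw [hl, List.prod_append, hl₁prod, hl₂prod]
    group
  have hlsw : ∀ t ∈ l, t.IsSwap := by
    intro t ht
    rcases List.mem_append.1 ht with ht | ht
    · exact hl₁sw t ht
    · exact hl₂sw t ht
  have hllen : l.length = trdist 1 P := by
    rw [hl, List.length_append, hl₁len, hl₂len, hgeo]
  obtain ⟨sw, hsw1, hsw2, hsw3⟩ := canonPerm_swapFactors (n := n) μ 0 hpos (by omega)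
  have hub : trdist 1 P ≤ sw.length := by
    apply Nat.sInf_le
    exact ⟨sw, rfl, hsw1, by rw [inv_one, one_mul, hP, hsw2]⟩
  have h1 : n - l.length ≤ Nat.card (Quot (relL l)) := card_quot_relL l hlsw
  set φ : Quot (Equiv.Perm.SameCycle P) → Quot (relL l) :=
    Quot.lift (Quot.mk (relL l))
      (fun x y h => Quot.eqvGen_sound (sameCycle_imp_eqvGen l (by rwa [hlprod]))) with hφ
  have hφsurj : Function.Surjective φ := by
    intro q
    obtain ⟨x, rfl⟩ := Quot.exists_rep q
    exact ⟨Quot.mk _ x, rfl⟩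
  have h2 : Nat.card (Quot (relL l)) ≤ Nat.card (Quot (Equiv.Perm.SameCycle P)) :=
    Nat.card_le_card_of_surjective φ hφsurj
  have h3 : Nat.card (Quot (Equiv.Perm.SameCycle P)) ≤ μ.length :=
    hP ▸ nOrb_canonPerm_le μ hpos hsum
  have hcards : Nat.card (Quot (Equiv.Perm.SameCycle P)) = Nat.card (Quot (relL l)) := by
    omega
  have hφbij : Function.Bijective φ :=
    (Nat.bijective_iff_surjective_and_card φ).2 ⟨hφsurj, hcards⟩
  have hback : ∀ x y : Fin n, Relation.EqvGen (relL l) x y → P.SameCycle x y := by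
    intro x y h
    have heq : φ (Quot.mk _ x) = φ (Quot.mk _ y) := by
      show Quot.mk (relL l) x = Quot.mk (relL l) y
      exact Quot.eqvGen_sound h
    have h4 : Quot.mk P.SameCycle x = Quot.mk P.SameCycle y := hφbij.injective heq
    exact ((Equiv.Perm.SameCycle.equivalence P).eqvGen_iff).1 (Quot.eq.1 h4)
  intro x
  have h5 : Relation.EqvGen (relL l₁) x (c x) := by
    rw [← hl₁prod]
    exact relL_prod l₁ x
  exact hback x (c x)
    (Relation.EqvGen.mono (fun a b ⟨s, hs, h'⟩ => ⟨s, List.mem_append_left _ hs, h'⟩) _ _ h5)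

lemma sameCycle_eq_of_refines {A P : Equiv.Perm (Fin n)}
    (hsub : ∀ x y : Fin n, A.SameCycle x y → P.SameCycle x y)
    (hcard : Nat.card (Quot A.SameCycle) = Nat.card (Quot P.SameCycle)) :
    ∀ x y : Fin n, P.SameCycle x y → A.SameCycle x y := by
  set ψ : Quot A.SameCycle → Quot P.SameCycle := Quot.map id hsub with hψ
  have hsurj : Function.Surjective ψ := by
    intro q
    obtain ⟨x, rfl⟩ := Quot.exists_rep q
    exact ⟨Quot.mk _ x, rfl⟩
  have hbij : Function.Bijective ψ :=
    (Nat.bijective_iff_surjective_and_card ψ).2 ⟨hsurj, hcard⟩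
  intro x y h
  have heq : ψ (Quot.mk _ x) = ψ (Quot.mk _ y) := by
    show Quot.mk P.SameCycle x = Quot.mk P.SameCycle y
    exact Quot.sound h
  have h4 : Quot.mk A.SameCycle x = Quot.mk A.SameCycle y := hbij.injective heq
  exact ((Equiv.Perm.SameCycle.equivalence A).eqvGen_iff).1 (Quot.eq.1 h4)

lemma card_quot_conj (u P : Equiv.Perm (Fin n)) :
    Nat.card (Quot (Equiv.Perm.SameCycle (u * P * u⁻¹))) = Nat.card (Quot P.SameCycle) :=
  (Nat.card_congr (Quot.congr (u : Equiv (Fin n) (Fin n)) (fun a b => by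
    rw [Equiv.Perm.sameCycle_conj]
    simp))).symm

lemma cycleMins_congr {A P : Equiv.Perm (Fin n)}
    (h : ∀ x y : Fin n, A.SameCycle x y ↔ P.SameCycle x y) : cycleMins A = cycleMins P := by
  unfold cycleMins
  congr 1
  exact @Finset.filter_congr _ _ _ (Classical.decPred _) (Classical.decPred _) _
    (fun x _ => ⟨fun hx j hj => hx j ((h x j).2 hj), fun hx j hj => hx j ((h x j).1 hj)⟩)

lemma mem_cycleMins {p : Equiv.Perm (Fin n)} {m : Fin n} :
    m ∈ cycleMins p ↔ ∀ j, p.SameCycle m j → m ≤ j := by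
  rw [cycleMins, Finset.mem_sort, Finset.filter_congr_decidable, Finset.mem_filter]
  simp

lemma exists_mem_cycleMins (p : Equiv.Perm (Fin n)) (x : Fin n) :
    ∃ m ∈ cycleMins p, p.SameCycle m x := by
  classical
  have hne : (Finset.univ.filter (fun j => p.SameCycle x j)).Nonempty :=
    ⟨x, by simp [Equiv.Perm.SameCycle.refl]⟩
  obtain ⟨hmem1, hmem2⟩ :=
    Finset.mem_filter.1 ((Finset.univ.filter (fun j => p.SameCycle x j)).min'_mem hne)
  refine ⟨_, ?_, hmem2.symm⟩
  rw [mem_cycleMins]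
  intro j hj
  exact Finset.min'_le _ j (Finset.mem_filter.2 ⟨Finset.mem_univ _, hmem2.trans hj⟩)

lemma map_pointwise {l : List (Fin n)} {u v : Equiv.Perm (Fin n)} (h : l.map u = l.map v) :
    ∀ m ∈ l, u m = v m := by
  intro m hm
  obtain ⟨i, hil, hi⟩ := List.getElem_of_mem hm
  subst hi
  have h1 : (l.map u)[i]'(by simpa using hil) = (l.map v)[i]'(by simpa using hil) := by
    simp only [h]
  simpa using h1

lemma map_eq_self_pointwise {l : List (Fin n)} {u : Equiv.Perm (Fin n)} (h : l.map u = l) :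
    ∀ m ∈ l, u m = m := by
  have h' : l.map u = l.map (1 : Equiv.Perm (Fin n)) := by simpa using h
  intro m hm
  simpa using map_pointwise h' m hm

lemma isConjugator_unique {P q u v : Equiv.Perm (Fin n)}
    (hu : IsConjugator P q u) (hv : IsConjugator P q v) : u = v := by
  unfold IsConjugator at hu hv
  obtain ⟨hu1, hu2⟩ := hu
  obtain ⟨hv1, hv2⟩ := hv
  have hmins : ∀ m ∈ cycleMins P, u m = v m := map_pointwise (hu2.trans hv2.symm)
  ext x
  obtain ⟨m, hmem, hsc⟩ := exists_mem_cycleMins P x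
  obtain ⟨i, hi⟩ := hsc
  have key : ∀ w : Equiv.Perm (Fin n), w * P * w⁻¹ = q → w x = (q ^ i) (w m) := by
    intro w hw
    calc w x = w ((P ^ i) m) := by rw [hi]
    _ = (w * P ^ i * w⁻¹) (w m) := by simp [Equiv.Perm.mul_apply]
    _ = (q ^ i) (w m) := by rw [← hw, conj_zpow]
  rw [key u hu1, key v hv1, hmins m hmem]

end Aux3


theorem stmt17 (n : ℕ) (μ : List ℕ) (hpos : ∀ x ∈ μ, 0 < x) (hsum : μ.sum = n)
    (P c u' d u'' : Equiv.Perm (Fin n)) (hP : P = canonPerm n μ 0)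
    (hc : c ∈ midpts 1 P)
    (hu' : IsConjugator P (c⁻¹ * (c⁻¹ * P)) u')
    (hd : d = u'⁻¹ * c⁻¹ * u')
    (hu'' : IsConjugator P (d⁻¹ * (d⁻¹ * P)) u'') :
    u''⁻¹ * d⁻¹ * u'' = c := by
  classical
  unfold IsConjugator at hu'
  obtain ⟨hu'1, hu'2⟩ := hu'
  simp only [midpts, Set.mem_setOf_eq] at hc
  obtain ⟨hgeo, -⟩ := hc
  have hpc : ∀ x, P.SameCycle x (c x) := geodesic_sameCycle μ hpos hsum hP hgeo
  have hpcinv : ∀ x, P.SameCycle x (c⁻¹ x) := fun x => by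
    have h := (hpc (c⁻¹ x)).symm
    rwa [show c (c⁻¹ x) = x from c.apply_symm_apply x] at h
  have hPA : ∀ x, P.SameCycle x ((c⁻¹ * (c⁻¹ * P)) x) := by
    intro x
    have h1 : P.SameCycle x (P x) := ⟨1, by simp⟩
    have h2 := hpcinv (P x)
    have h3 := hpcinv (c⁻¹ (P x))
    exact (h1.trans h2).trans h3
  have hAP : ∀ x y : Fin n, (c⁻¹ * (c⁻¹ * P)).SameCycle x y → P.SameCycle x y := by
    rintro x y ⟨i, hi⟩
    rw [← hi]
    exact rel_zpow (Equiv.Perm.SameCycle.equivalence P) hPA i x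
  have hcard : Nat.card (Quot (c⁻¹ * (c⁻¹ * P)).SameCycle) = Nat.card (Quot P.SameCycle) := by
    rw [← hu'1]
    exact card_quot_conj u' P
  have hPA2 : ∀ x y : Fin n, P.SameCycle x y → (c⁻¹ * (c⁻¹ * P)).SameCycle x y :=
    sameCycle_eq_of_refines hAP hcard
  have hminsA : cycleMins (c⁻¹ * (c⁻¹ * P)) = cycleMins P :=
    cycleMins_congr (fun x y => ⟨hAP x y, hPA2 x y⟩)
  have hufix : ∀ m ∈ cycleMins P, u' m = m :=
    map_eq_self_pointwise (by rw [hu'2, hminsA])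
  have hupres : ∀ x, P.SameCycle x (u' x) := by
    intro x
    obtain ⟨m, hm, hsc⟩ := exists_mem_cycleMins P x
    have hsc' := hsc
    obtain ⟨i, hi⟩ := hsc'
    have hconji : u' * P ^ i * u'⁻¹ = (c⁻¹ * (c⁻¹ * P)) ^ i := by
      rw [← conj_zpow, hu'1]
    have hux : u' x = ((c⁻¹ * (c⁻¹ * P)) ^ i) m := by
      calc u' x = u' ((P ^ i) m) := by rw [hi]
      _ = (u' * P ^ i * u'⁻¹) (u' m) := by simp [Equiv.Perm.mul_apply]
      _ = ((c⁻¹ * (c⁻¹ * P)) ^ i) (u' m) := by rw [hconji]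
      _ = ((c⁻¹ * (c⁻¹ * P)) ^ i) m := by rw [hufix m hm]
    have h5 : (c⁻¹ * (c⁻¹ * P)).SameCycle m (((c⁻¹ * (c⁻¹ * P)) ^ i) m) := ⟨i, rfl⟩
    have h6 : P.SameCycle m (u' x) := by
      rw [hux]
      exact hAP _ _ h5
    exact hsc.symm.trans h6
  have hq : d⁻¹ * (d⁻¹ * P) = u'⁻¹ * P * u' := by
    have hdinv : d⁻¹ = u'⁻¹ * c * u' := by rw [hd]; group
    have h7 : u' * P = c⁻¹ * (c⁻¹ * P) * u' := by rw [← hu'1]; group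
    rw [hdinv]
    calc (u'⁻¹ * c * u') * ((u'⁻¹ * c * u') * P) = u'⁻¹ * (c * (c * (u' * P))) := by group
    _ = u'⁻¹ * (c * (c * (c⁻¹ * (c⁻¹ * P) * u'))) := by rw [h7]
    _ = u'⁻¹ * P * u' := by group
  have hqP : ∀ x y : Fin n, (u'⁻¹ * P * u').SameCycle x y ↔ P.SameCycle x y := by
    intro x y
    have h8 : u'⁻¹ * P * u' = u'⁻¹ * P * (u'⁻¹)⁻¹ := by simp
    rw [h8, Equiv.Perm.sameCycle_conj]
    simp only [inv_inv]
    constructor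
    · intro h
      exact ((hupres x).trans h).trans (hupres y).symm
    · intro h
      exact ((hupres x).symm.trans (h.trans (hupres y)))
  have hminsq : cycleMins (u'⁻¹ * P * u') = cycleMins P := cycleMins_congr hqP
  have hconj : IsConjugator P (d⁻¹ * (d⁻¹ * P)) u'⁻¹ := by
    unfold IsConjugator
    constructor
    · rw [inv_inv, hq]
    · rw [hq, hminsq]
      have hfix : ∀ m ∈ cycleMins P, u'⁻¹ m = m := by
        intro m hm
        conv_lhs => rw [← hufix m hm]
        exact u'.symm_apply_apply m
      rw [show (cycleMins P).map (⇑(u'⁻¹)) = (cycleMins P).map id from List.map_congr_left hfix,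
        List.map_id]
  have huu : u'' = u'⁻¹ := isConjugator_unique hu'' hconj
  rw [huu, hd]
  group
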